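/- Limit of rejection probability at infinity: assume π satisfies (A1), i.e. lim_{|x|→∞} π(x)/π(xε) = |ε|^p for some 1 < p ≤ ∞ and all ε ∈ Y=(-1,1)\{0} (with |ε|^∞ := 0). Then the RDMH rejection probability ρ(x) = (1/2)∫_{r(x)}(1 - π(xε)|ε|/π(x))g(ε)dε + (1/2)∫_{R(x)}(1 - π(x/ε)/(π(x)|ε|))g(ε)dε converges, as |x| → ∞, to (1/2)∫_Y (1 - |ε|^{p-1}) g(ε) dε. -/
import Mathlib


open MeasureTheory Set Filter

/-- The set of admissible multipliers `Y = (-1,1) \ {0}`. -/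
def rdmhY : Set ℝ := Ioo (-1 : ℝ) 1 \ {0}

/-- Potential inner rejection region `r(x)`. -/
def innerRej (π : ℝ → ℝ) (x : ℝ) : Set ℝ :=
  {ε ∈ rdmhY | π (x * ε) * |ε| / π x < 1}

/-- Potential outer rejection region `R(x)`. -/
def outerRej (π : ℝ → ℝ) (x : ℝ) : Set ℝ :=
  {ε ∈ rdmhY | π (x / ε) / (π x * |ε|) < 1}

/-- The rejection probability of the RDMH chain at `x`. -/
noncomputable def rdmhRho (g π : ℝ → ℝ) (x : ℝ) : ℝ :=
  (1 / 2) * (∫ ε in innerRej π x, (1 - π (x * ε) * |ε| / π x) * g ε) +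
  (1 / 2) * (∫ ε in outerRej π x, (1 - π (x / ε) / (π x * |ε|)) * g ε)

theorem stmt_10 (g : ℝ → ℝ) (hg_meas : Measurable g) (hg_nonneg : ∀ ε, 0 ≤ g ε)
    (hg_supp : ∀ ε, ε ∉ rdmhY → g ε = 0) (hg_int : IntegrableOn g rdmhY)
    (hg_one : ∫ ε in rdmhY, g ε = 1)
    (π : ℝ → ℝ) (hπ_pos : ∀ z, 0 < π z) (hπ_cont : Continuous π)
    (p : ENNReal) (hp : 1 < p)
    (h : ℝ → ℝ)
    (hh_fin : p ≠ ⊤ → ∀ ε : ℝ, h ε = |ε| ^ p.toReal)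
    (hh_top : p = ⊤ → ∀ ε : ℝ, h ε = 0)
    (hA1 : ∀ ε ∈ rdmhY,
      Tendsto (fun x : ℝ => π x / π (x * ε)) (comap (fun x : ℝ => |x|) atTop)
        (nhds (h ε))) :
    Tendsto (rdmhRho g π) (comap (fun x : ℝ => |x|) atTop)
      (nhds ((1 / 2) * ∫ ε in rdmhY, (1 - h ε / |ε|) * g ε)) := by
  have hYmeas : MeasurableSet rdmhY :=
    measurableSet_Ioo.diff (measurableSet_singleton 0)
  set l : Filter ℝ := comap (fun x : ℝ => |x|) atTop with hldef
  have hYfact : ∀ ε ∈ rdmhY, 0 < |ε| ∧ |ε| < 1 := by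
    intro ε hε
    rcases hε with ⟨hio, hne⟩
    exact ⟨abs_pos.2 hne, abs_lt.2 ⟨hio.1, hio.2⟩⟩
  have hkey : ∀ ε ∈ rdmhY, h ε < |ε| ∧ 0 ≤ h ε := by
    intro ε hε
    obtain ⟨hpos, hlt1⟩ := hYfact ε hε
    rcases eq_or_ne p ⊤ with hpt | hpt
    · rw [hh_top hpt ε]; exact ⟨hpos, le_refl 0⟩
    · rw [hh_fin hpt ε]
      have h1 : (1 : ℝ) < p.toReal := by
        have := (ENNReal.toReal_lt_toReal ENNReal.one_ne_top hpt).2 hp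
        simpa using this
      refine ⟨?_, Real.rpow_nonneg (abs_nonneg ε) _⟩
      calc |ε| ^ p.toReal < |ε| ^ (1 : ℝ) :=
            Real.rpow_lt_rpow_of_exponent_gt hpos hlt1 h1
        _ = |ε| := Real.rpow_one _
  have hg_all : Integrable g := by
    have hEq : g = rdmhY.indicator g := by
      funext ε
      by_cases hε : ε ∈ rdmhY
      · simp [Set.indicator_of_mem hε]
      · simp [Set.indicator_of_notMem hε, hg_supp ε hε]
    rw [hEq, integrable_indicator_iff hYmeas]
    exact hg_int
  -- inner part tends to 0
  have hinner_meas : ∀ x, MeasurableSet (innerRej π x) := by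
    intro x
    have hc : Continuous fun ε : ℝ => π (x * ε) * |ε| / π x :=
      ((hπ_cont.comp (continuous_const.mul continuous_id)).mul continuous_abs).div_const _
    exact hYmeas.inter (measurableSet_lt hc.measurable measurable_const)
  have hinner_fmeas : ∀ x : ℝ, Measurable fun ε => (1 - π (x * ε) * |ε| / π x) * g ε := by
    intro x
    have hc : Continuous fun ε : ℝ => π (x * ε) * |ε| / π x :=
      ((hπ_cont.comp (continuous_const.mul continuous_id)).mul continuous_abs).div_const _
    exact (measurable_const.sub hc.measurable).mul hg_meas
  have hI1 : Tendsto
      (fun x => ∫ ε in innerRej π x, (1 - π (x * ε) * |ε| / π x) * g ε) l (nhds 0) := by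
    have hDCT := tendsto_integral_filter_of_dominated_convergence (μ := volume) (l := l)
      (F := fun x => (innerRej π x).indicator fun ε => (1 - π (x * ε) * |ε| / π x) * g ε)
      (f := fun _ => (0 : ℝ)) g
      (Eventually.of_forall fun x =>
        ((hinner_fmeas x).indicator (hinner_meas x)).aestronglyMeasurable)
      (Eventually.of_forall fun x => ae_of_all _ fun ε => by
        beta_reduce
        by_cases hε : ε ∈ innerRej π x
        · rw [Set.indicator_of_mem hε]
          simp only [innerRej, Set.mem_sep_iff] at hε
          obtain ⟨hεY, hlt⟩ := hε
          have hq0 : 0 < π (x * ε) * |ε| / π x :=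
            div_pos (mul_pos (hπ_pos _) (hYfact ε hεY).1) (hπ_pos x)
          rw [Real.norm_eq_abs, abs_of_nonneg (mul_nonneg (by linarith) (hg_nonneg ε))]
          nlinarith [hg_nonneg ε]
        · rw [Set.indicator_of_notMem hε]
          simpa using hg_nonneg ε)
      hg_all
      (ae_of_all _ fun ε => by
        by_cases hεY : ε ∈ rdmhY
        · have hev : ∀ᶠ x in l, π x / π (x * ε) < |ε| :=
            (hA1 ε hεY).eventually_lt_const (hkey ε hεY).1
          have hzero : ∀ᶠ x in l,
              (innerRej π x).indicator (fun ε => (1 - π (x * ε) * |ε| / π x) * g ε) ε = 0 := by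
            refine hev.mono fun x hx => ?_
            rw [Set.indicator_of_notMem]
            intro hmem
            simp only [innerRej, Set.mem_sep_iff] at hmem
            have h1 : π x < |ε| * π (x * ε) := (div_lt_iff₀ (hπ_pos _)).1 hx
            have h2 : π (x * ε) * |ε| < π x := (div_lt_one (hπ_pos x)).1 hmem.2
            nlinarith
          exact Tendsto.congr' (hzero.mono fun x hx => hx.symm) tendsto_const_nhds
        · have hzero : ∀ x : ℝ,
              (innerRej π x).indicator (fun ε => (1 - π (x * ε) * |ε| / π x) * g ε) ε = 0 := by
            intro x
            exact Set.indicator_of_notMem (fun hmem => hεY hmem.1) _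
          simpa [hzero] using (tendsto_const_nhds :
            Tendsto (fun _ : ℝ => (0 : ℝ)) l (nhds 0)))
    have : (∫ _ : ℝ, (0 : ℝ)) = 0 := integral_zero _ _
    rw [this] at hDCT
    exact hDCT.congr fun x => integral_indicator (hinner_meas x)
  -- outer part tends to the limit integral
  have houter_meas : ∀ x, MeasurableSet (outerRej π x) := by
    intro x
    have hm : Measurable fun ε : ℝ => π (x / ε) / (π x * |ε|) :=
      (hπ_cont.measurable.comp (measurable_const.div measurable_id)).div
        (measurable_const.mul continuous_abs.measurable)
    exact hYmeas.inter (measurableSet_lt hm measurable_const)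
  have houter_fmeas : ∀ x : ℝ, Measurable fun ε => (1 - π (x / ε) / (π x * |ε|)) * g ε := by
    intro x
    have hm : Measurable fun ε : ℝ => π (x / ε) / (π x * |ε|) :=
      (hπ_cont.measurable.comp (measurable_const.div measurable_id)).div
        (measurable_const.mul continuous_abs.measurable)
    exact (measurable_const.sub hm).mul hg_meas
  have hI2 : Tendsto
      (fun x => ∫ ε in outerRej π x, (1 - π (x / ε) / (π x * |ε|)) * g ε) l
      (nhds (∫ ε in rdmhY, (1 - h ε / |ε|) * g ε)) := by
    have hDCT := tendsto_integral_filter_of_dominated_convergence (μ := volume) (l := l)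
      (F := fun x => (outerRej π x).indicator fun ε => (1 - π (x / ε) / (π x * |ε|)) * g ε)
      (f := rdmhY.indicator fun ε => (1 - h ε / |ε|) * g ε) g
      (Eventually.of_forall fun x =>
        ((houter_fmeas x).indicator (houter_meas x)).aestronglyMeasurable)
      (Eventually.of_forall fun x => ae_of_all _ fun ε => by
        beta_reduce
        by_cases hε : ε ∈ outerRej π x
        · rw [Set.indicator_of_mem hε]
          simp only [outerRej, Set.mem_sep_iff] at hε
          obtain ⟨hεY, hlt⟩ := hε
          have hq0 : 0 < π (x / ε) / (π x * |ε|) :=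
            div_pos (hπ_pos _) (mul_pos (hπ_pos x) (hYfact ε hεY).1)
          rw [Real.norm_eq_abs, abs_of_nonneg (mul_nonneg (by linarith) (hg_nonneg ε))]
          nlinarith [hg_nonneg ε]
        · rw [Set.indicator_of_notMem hε]
          simpa using hg_nonneg ε)
      hg_all
      (ae_of_all _ fun ε => by
        by_cases hεY : ε ∈ rdmhY
        · have hε0 : ε ≠ 0 := hεY.2
          have hpos : 0 < |ε| := (hYfact ε hεY).1
          have hcl : Tendsto (fun x : ℝ => x / ε) l l := by
            rw [hldef, tendsto_comap_iff]
            have h1 : Tendsto (fun x : ℝ => |x| / |ε|) l atTop :=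
              (tendsto_comap : Tendsto (fun x : ℝ => |x|) l atTop).atTop_div_const hpos
            refine h1.congr fun x => ?_
            simp [Function.comp, abs_div]
          have hq : Tendsto (fun x => π (x / ε) / π x) l (nhds (h ε)) := by
            have hcomp := (hA1 ε hεY).comp hcl
            refine hcomp.congr fun x => ?_
            simp [Function.comp, div_mul_cancel₀ x hε0]
          have hq2 : Tendsto (fun x => π (x / ε) / (π x * |ε|)) l (nhds (h ε / |ε|)) := by
            have := hq.div_const |ε|
            refine this.congr fun x => ?_
            rw [div_div]
          have hlt1 : h ε / |ε| < 1 := (div_lt_one hpos).2 (hkey ε hεY).1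
          have hev : ∀ᶠ x in l, ε ∈ outerRej π x :=
            (hq2.eventually_lt_const hlt1).mono fun x hx => ⟨hεY, hx⟩
          have hval : Tendsto (fun x => (1 - π (x / ε) / (π x * |ε|)) * g ε) l
              (nhds ((1 - h ε / |ε|) * g ε)) :=
            (tendsto_const_nhds.sub hq2).mul_const _
          rw [Set.indicator_of_mem hεY]
          exact Tendsto.congr'
            (hev.mono fun x hx => (Set.indicator_of_mem hx _).symm) hval
        · have hzero : ∀ x : ℝ,
              (outerRej π x).indicator (fun ε => (1 - π (x / ε) / (π x * |ε|)) * g ε) ε = 0 := by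
            intro x
            exact Set.indicator_of_notMem (fun hmem => hεY hmem.1) _
          rw [Set.indicator_of_notMem hεY]
          simpa [hzero] using (tendsto_const_nhds :
            Tendsto (fun _ : ℝ => (0 : ℝ)) l (nhds 0)))
    rw [integral_indicator hYmeas] at hDCT
    exact hDCT.congr fun x => integral_indicator (houter_meas x)
  have hfin := (hI1.const_mul (1 / 2 : ℝ)).add (hI2.const_mul (1 / 2 : ℝ))
  rw [mul_zero, zero_add] at hfin
  exact hfin.congr fun _ => rfl
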